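/- Let q be an odd prime power and let m ≥ 2 be an integer with gcd(q-1, m(m-1)) = 2. Then the discriminants of the monic irreducible polynomials of degree m in F_q[x] are equally distributed among the (q-1)/2 elements d of F_q^× with χ_q(d) = (-1)^(m-1); that is, for any two elements d_1, d_2 ∈ F_q^× with χ_q(d_1) = χ_q(d_2) = (-1)^(m-1), the number of monic irreducible polynomials of degree m in F_q[x] with discriminant d_1 equals the number with discriminant d_2. -/

import Mathlib

open Polynomial
open scoped Classical

/-- The discriminant of a polynomial `f` of degree `m ≥ 2` over a field `F`, computed in an
algebraic closure via the standard formula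
`disc(f) = (-1)^(m(m-1)/2) · a_m^(m-2) · ∏_i f'(α_i)`, where `a_m` is the leading coefficient
and the `α_i` are the roots of `f` (with multiplicity) in the algebraic closure; this equals
`a_m^(2m-2) · ∏_{i<j} (α_i - α_j)^2`.  For `f` of degree at most 1 it is defined to be `1`. -/
noncomputable def polyDisc {F : Type*} [Field F] (f : F[X]) : AlgebraicClosure F :=
  if f.natDegree ≤ 1 then 1
  else
    (-1) ^ (f.natDegree * (f.natDegree - 1) / 2) *
      algebraMap F (AlgebraicClosure F) f.leadingCoeff ^ (f.natDegree - 2) *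
      (Multiset.map (fun a => ((derivative f).map (algebraMap F (AlgebraicClosure F))).eval a)
        (f.map (algebraMap F (AlgebraicClosure F))).roots).prod

/-- The Möbius function on polynomials over a field: `μ f = (-1)^k` if `f` is squarefree
with `k` (distinct) monic irreducible factors, and `μ f = 0` otherwise. -/
noncomputable def polyMu {F : Type*} [Field F] (f : F[X]) : ℤ :=
  if Squarefree f then (-1) ^ {π : F[X] | π.Monic ∧ Irreducible π ∧ π ∣ f}.ncard else 0

/-- `f` has factorization type `λ` (a partition of `m`): `f` is a product of distinct monic
irreducible polynomials whose degrees form the multiset of parts of `λ`.  The set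
`S_{λ,F}` of monic squarefree polynomials of factorization type `λ` is
`{f | hasFactorizationType f λ}`. -/
def hasFactorizationType {F : Type*} [Field F] (f : F[X]) {m : ℕ} (lam : m.Partition) : Prop :=
  ∃ s : Finset F[X], (∀ π ∈ s, π.Monic ∧ Irreducible π) ∧ (∏ π ∈ s, π) = f ∧
    Multiset.map natDegree s.val = lam.parts


namespace Stmt1Aux
variable {F : Type*} [Field F]

/-- Scaling map: for `f` of degree `m`, `Phi c m f = c⁻ᵐ · f(cx)`. -/
noncomputable def Phi (c : F) (m : ℕ) (f : F[X]) : F[X] :=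
  C (c⁻¹ ^ m) * f.comp (C c * X)

lemma comp_linear_inv {c : F} (hc : c ≠ 0) (f : F[X]) :
    (f.comp (C c * X)).comp (C c⁻¹ * X) = f := by
  rw [comp_assoc]
  have : (C c * X).comp (C c⁻¹ * X) = X := by
    rw [mul_comp, C_comp, X_comp, ← mul_assoc, ← C_mul, mul_inv_cancel₀ hc, C_1, one_mul]
  rw [this, comp_X]

lemma Phi_Phi {c : F} (hc : c ≠ 0) (m : ℕ) (f : F[X]) :
    Phi c⁻¹ m (Phi c m f) = f := by
  rw [Phi, Phi, mul_comp, C_comp, comp_linear_inv hc, inv_inv, ← mul_assoc, ← C_mul,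
    ← mul_pow, mul_inv_cancel₀ hc, one_pow, C_1, one_mul]

lemma natDegree_Phi {c : F} (hc : c ≠ 0) (m : ℕ) (f : F[X]) :
    (Phi c m f).natDegree = f.natDegree := by
  rw [Phi, natDegree_C_mul (pow_ne_zero _ (inv_ne_zero hc)), natDegree_comp,
    natDegree_C_mul_X _ hc, mul_one]

lemma monic_Phi {c : F} (hc : c ≠ 0) {m : ℕ} {f : F[X]} (hf : f.Monic)
    (hd : f.natDegree = m) : (Phi c m f).Monic := by
  have h1 : (C c * X).leadingCoeff = c := by
    rw [leadingCoeff_mul, leadingCoeff_C, leadingCoeff_X, mul_one]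
  unfold Monic
  rw [Phi, leadingCoeff_mul, leadingCoeff_C,
    leadingCoeff_comp (by rw [natDegree_C_mul_X _ hc]; norm_num), hf.leadingCoeff, one_mul,
    h1, hd, ← mul_pow, inv_mul_cancel₀ hc, one_pow]

lemma irreducible_comp_linear {c : F} (hc : c ≠ 0) {f : F[X]} (hf : Irreducible f) :
    Irreducible (f.comp (C c * X)) := by
  have hdeg : ∀ p : F[X], (p.comp (C c⁻¹ * X)).natDegree = p.natDegree := fun p => by
    rw [natDegree_comp, natDegree_C_mul_X _ (inv_ne_zero hc), mul_one]
  constructor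
  · intro h
    have := natDegree_eq_zero_of_isUnit h
    rw [natDegree_comp, natDegree_C_mul_X _ hc, mul_one] at this
    exact hf.natDegree_pos.ne' this
  · intro a b hab
    have hfab : f = a.comp (C c⁻¹ * X) * b.comp (C c⁻¹ * X) := by
      rw [← mul_comp, ← hab, comp_linear_inv hc]
    have hf0 : f ≠ 0 := hf.ne_zero
    have hab0 : f.comp (C c * X) ≠ 0 := by
      intro h0
      apply hf0
      have := congrArg (fun p => p.comp (C c⁻¹ * X)) h0
      simpa [comp_linear_inv hc] using this
    have ha0 : a ≠ 0 := by rintro rfl; simp at hab; exact hab0 hab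
    have hb0 : b ≠ 0 := by rintro rfl; simp at hab; exact hab0 hab
    rcases hf.isUnit_or_isUnit hfab with h | h
    · left
      have := natDegree_eq_zero_of_isUnit h
      rw [hdeg] at this
      rw [eq_C_of_natDegree_eq_zero this]
      refine isUnit_C.mpr (Ne.isUnit fun h0 => ha0 ?_)
      rw [eq_C_of_natDegree_eq_zero this, h0, C_0]
    · right
      have := natDegree_eq_zero_of_isUnit h
      rw [hdeg] at this
      rw [eq_C_of_natDegree_eq_zero this]
      refine isUnit_C.mpr (Ne.isUnit fun h0 => hb0 ?_)
      rw [eq_C_of_natDegree_eq_zero this, h0, C_0]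

lemma irreducible_Phi {c : F} (hc : c ≠ 0) {m : ℕ} {f : F[X]} (hf : Irreducible f) :
    Irreducible (Phi c m f) := by
  have : Associated (f.comp (C c * X)) (Phi c m f) := by
    refine ⟨(Units.map C.toMonoidHom) (Units.mk0 (c⁻¹ ^ m) (pow_ne_zero _ (inv_ne_zero hc))), ?_⟩
    rw [Phi, mul_comm]
    rfl
  exact this.irreducible (irreducible_comp_linear hc hf)

lemma map_Phi {K : Type*} [Field K] (ι : F →+* K) (c : F) (m : ℕ) (f : F[X]) :
    (Phi c m f).map ι = Phi (ι c) m (f.map ι) := by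
  simp [Phi, Polynomial.map_comp, map_pow, map_inv₀]

lemma Phi_prod {K : Type*} [Field K] {c : K} (hc : c ≠ 0) {m : ℕ} {s : Multiset K}
    (hs : Multiset.card s = m) :
    Phi c m ((s.map fun a => X - C a).prod) = (s.map fun a => X - C (c⁻¹ * a)).prod := by
  rw [Phi, multiset_prod_comp, Multiset.map_map]
  have h1 : ∀ a : K, (X - C a).comp (C c * X) = C c * (X - C (c⁻¹ * a)) := by
    intro a
    rw [sub_comp, X_comp, C_comp, mul_sub, ← C_mul, mul_inv_cancel_left₀ hc]
  simp only [Function.comp, h1]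
  rw [Multiset.prod_map_mul, Multiset.map_const', Multiset.prod_replicate, hs,
    ← C_pow, ← mul_assoc, ← C_mul, ← mul_pow, inv_mul_cancel₀ hc, one_pow, C_1, one_mul]

lemma derivative_Phi (c : F) (m : ℕ) (f : F[X]) :
    derivative (Phi c m f) = C (c⁻¹ ^ m * c) * (derivative f).comp (C c * X) := by
  rw [Phi, derivative_C_mul, derivative_comp]
  have : derivative (C c * X) = C c := by
    rw [derivative_C_mul, derivative_X, mul_one]
  rw [this, C_mul, mul_assoc, mul_comm (C c), ← mul_assoc]

lemma polyDisc_Phi {c : F} (hc : c ≠ 0) {f : F[X]} (hf : f.Monic) {m : ℕ} (hm : 2 ≤ m)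
    (hd : f.natDegree = m) :
    polyDisc (Phi c m f) =
      (algebraMap F (AlgebraicClosure F) c)⁻¹ ^ (m * (m - 1)) * polyDisc f := by
  set K := AlgebraicClosure F
  set ι := algebraMap F K with hι
  have hc' : ι c ≠ 0 := by
    simpa using (map_ne_zero_iff ι (RingHom.injective ι)).mpr hc
  set p := f.map ι with hp
  have hpm : p.Monic := hf.map ι
  have hsplit : p.Splits := IsAlgClosed.splits p
  have hpd : p.natDegree = m := by rw [hp, natDegree_map, hd]
  have hcard : Multiset.card p.roots = m := by
    have h := hsplit.natDegree_eq_card_roots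
    rw [hpd] at h
    exact h.symm
  have hprod : p = (p.roots.map fun a => X - C a).prod :=
    hsplit.eq_prod_roots_of_monic hpm
  have hmap : (Phi c m f).map ι = (p.roots.map fun a => X - C ((ι c)⁻¹ * a)).prod := by
    rw [map_Phi, ← hp]
    conv_lhs => rw [hprod]
    exact Phi_prod hc' hcard
  have hroots : ((Phi c m f).map ι).roots = p.roots.map fun a => (ι c)⁻¹ * a := by
    rw [hmap, show (fun a => X - C ((ι c)⁻¹ * a)) = (fun b => X - C b) ∘ (fun a => (ι c)⁻¹ * a)
      from rfl, ← Multiset.map_map, roots_multiset_prod_X_sub_C]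
  have hm1 : m - 1 + 1 = m := by omega
  have heval : ∀ a : K, eval ((ι c)⁻¹ * a) ((derivative (Phi c m f)).map ι) =
      (ι c)⁻¹ ^ (m - 1) * eval a ((derivative f).map ι) := by
    intro a
    rw [derivative_Phi, Polynomial.map_mul, Polynomial.map_C, Polynomial.map_comp,
      eval_mul, eval_C, eval_comp, Polynomial.map_mul, Polynomial.map_C, Polynomial.map_X,
      eval_mul, eval_C, eval_X, mul_inv_cancel_left₀ hc']
    congr 1
    rw [map_mul, map_pow, map_inv₀]
    conv_lhs => rw [← hm1]
    rw [pow_succ, mul_assoc, inv_mul_cancel₀ hc', mul_one]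
  have hPd : (Phi c m f).natDegree = m := by rw [natDegree_Phi hc, hd]
  have hPm : (Phi c m f).Monic := monic_Phi hc hf hd
  have h1 : ¬ ((Phi c m f).natDegree ≤ 1) := by rw [hPd]; omega
  have h2 : ¬ (f.natDegree ≤ 1) := by rw [hd]; omega
  rw [polyDisc, polyDisc, if_neg h1, if_neg h2, hPd, hd,
    hPm.leadingCoeff, hf.leadingCoeff, map_one, one_pow, hroots, Multiset.map_map]
  simp +zetaDelta only [Function.comp, heval]
  rw [Multiset.prod_map_mul, Multiset.map_const', Multiset.prod_replicate, hcard,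
    ← pow_mul, Nat.mul_comm (m - 1) m]
  ring

lemma exists_root_pow {F : Type*} [Field F] [Fintype F] [DecidableEq F] (q k : ℕ)
    (hq : Fintype.card F = q) (hgcd : Nat.gcd (q - 1) k = 2) {u : F} (hu : u ≠ 0)
    (hsq : IsSquare u) : ∃ c : F, c ≠ 0 ∧ c ^ k = u := by
  obtain ⟨v, hv⟩ := hsq
  have hvne : v ≠ 0 := by rintro rfl; rw [mul_zero] at hv; exact hu hv
  set w : Fˣ := Units.mk0 v hvne with hwdef
  have hcard : Fintype.card Fˣ = q - 1 := by rw [Fintype.card_units, hq]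
  have hw1 : w ^ (q - 1) = 1 := by rw [← hcard]; exact pow_card_eq_one
  set a := Nat.gcdA (q - 1) k
  set b := Nat.gcdB (q - 1) k
  have hbez : ((q - 1 : ℕ) : ℤ) * a + (k : ℤ) * b = 2 := by
    have h := Nat.gcd_eq_gcd_ab (q - 1) k
    rw [hgcd] at h
    exact_mod_cast h.symm
  have key : (w ^ b) ^ (k : ℤ) = w ^ (2 : ℤ) := by
    rw [← zpow_mul, mul_comm b (k : ℤ)]
    conv_rhs => rw [show (2 : ℤ) = ((q - 1 : ℕ) : ℤ) * a + (k : ℤ) * b from hbez.symm]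
    rw [zpow_add, zpow_mul w ((q - 1 : ℕ) : ℤ) a, zpow_natCast w (q - 1), hw1, one_zpow, one_mul]
  have key2 : (w ^ b) ^ (k : ℕ) = w ^ (2 : ℕ) := by
    have h := key
    rw [zpow_natCast, show ((2:ℤ)) = ((2:ℕ):ℤ) from rfl, zpow_natCast] at h
    exact h
  refine ⟨((w ^ b : Fˣ) : F), Units.ne_zero _, ?_⟩
  rw [← Units.val_pow_eq_pow_val, key2, Units.val_pow_eq_pow_val, hwdef, Units.val_mk0, sq, ← hv]

end Stmt1Aux

/-- If `q` is an odd prime power and `m ≥ 2` satisfies `gcd(q-1, m(m-1)) = 2`, then the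
discriminants of the monic irreducible polynomials of degree `m` are equally distributed among
the elements `d` of `F_q^×` with `χ_q(d) = (-1)^(m-1)`. -/
theorem stmt1 {F : Type*} [Field F] [Fintype F] [DecidableEq F] (q m : ℕ)
    (hq : Fintype.card F = q) (hodd : Odd q) (hm : 2 ≤ m)
    (hgcd : Nat.gcd (q - 1) (m * (m - 1)) = 2) (d₁ d₂ : F) (hd₁ : d₁ ≠ 0) (hd₂ : d₂ ≠ 0)
    (hχ₁ : quadraticChar F d₁ = (-1 : ℤ) ^ (m - 1))
    (hχ₂ : quadraticChar F d₂ = (-1 : ℤ) ^ (m - 1)) :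
    {f : F[X] | f.Monic ∧ Irreducible f ∧ f.natDegree = m ∧
        polyDisc f = algebraMap F (AlgebraicClosure F) d₁}.ncard =
    {f : F[X] | f.Monic ∧ Irreducible f ∧ f.natDegree = m ∧
        polyDisc f = algebraMap F (AlgebraicClosure F) d₂}.ncard := by
  classical
  set ι := algebraMap F (AlgebraicClosure F) with hι
  set k := m * (m - 1) with hk
  set S : F → Set F[X] := fun d => {f : F[X] | f.Monic ∧ Irreducible f ∧ f.natDegree = m ∧
      polyDisc f = ι d} with hS
  have hne : d₁ * d₂⁻¹ ≠ 0 := mul_ne_zero hd₁ (inv_ne_zero hd₂)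
  have hchi : quadraticChar F (d₁ * d₂⁻¹) = 1 := by
    have h1 : quadraticChar F (d₁ * d₂⁻¹) * quadraticChar F d₂ = quadraticChar F d₁ := by
      rw [← map_mul, mul_assoc, inv_mul_cancel₀ hd₂, mul_one]
    rw [hχ₁, hχ₂] at h1
    have h2 : ((-1 : ℤ) ^ (m - 1)) ≠ 0 := pow_ne_zero _ (by norm_num)
    exact mul_right_cancel₀ h2 (by rw [h1, one_mul])
  have hsq : IsSquare (d₁ * d₂⁻¹) := (quadraticChar_one_iff_isSquare hne).mp hchi
  obtain ⟨c, hc0, hck⟩ := Stmt1Aux.exists_root_pow q k hq hgcd hne hsq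
  have main : ∀ (c : F), c ≠ 0 → ∀ (d d' : F), d ≠ 0 → d' ≠ 0 → c ^ k = d * d'⁻¹ →
      ∀ f ∈ S d, Stmt1Aux.Phi c m f ∈ S d' := by
    intro c hc d d' hd hd' hckk f hf
    obtain ⟨hmon, hirr, hdeg, hdisc⟩ := hf
    refine ⟨Stmt1Aux.monic_Phi hc hmon hdeg, Stmt1Aux.irreducible_Phi hc hirr,
      by rw [Stmt1Aux.natDegree_Phi hc, hdeg], ?_⟩
    rw [Stmt1Aux.polyDisc_Phi hc hmon hm hdeg, ← hk, hdisc, ← hι, ← map_inv₀, ← map_pow,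
      ← map_mul]
    congr 1
    rw [inv_pow, hckk]
    field_simp
  have hinj : Function.Injective (Stmt1Aux.Phi c m) :=
    Function.LeftInverse.injective (g := Stmt1Aux.Phi c⁻¹ m)
      (fun f => Stmt1Aux.Phi_Phi hc0 m f)
  have himg : Stmt1Aux.Phi c m '' (S d₁) = S d₂ := by
    apply Set.Subset.antisymm
    · rintro _ ⟨f, hf, rfl⟩
      exact main c hc0 d₁ d₂ hd₁ hd₂ hck f hf
    · intro g hg
      have hc0' : c⁻¹ ≠ 0 := inv_ne_zero hc0
      have hck' : (c⁻¹) ^ k = d₂ * d₁⁻¹ := by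
        rw [inv_pow, hck]
        field_simp
      refine ⟨Stmt1Aux.Phi c⁻¹ m g, main c⁻¹ hc0' d₂ d₁ hd₂ hd₁ hck' g hg, ?_⟩
      have h := Stmt1Aux.Phi_Phi hc0' m g
      rwa [inv_inv] at h
  have : S d₁ = {f : F[X] | f.Monic ∧ Irreducible f ∧ f.natDegree = m ∧
      polyDisc f = ι d₁} := rfl
  calc (S d₁).ncard = (Stmt1Aux.Phi c m '' (S d₁)).ncard :=
        (Set.ncard_image_of_injective _ hinj).symm
    _ = (S d₂).ncard := by rw [himg]
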